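/- Let z be an involution in S_{2n} and let v_n = (1,2)(3,4)⋯(2n−1,2n). Then there exists a sequence of simple transpositions transforming v_n into z via the operation ⋊ (with each step strictly increasing length) if and only if z has no fixed points. -/

import Mathlib

/-- The Coxeter length of a permutation of `Fin n`, i.e. its number of inversions. -/
def ell {n : ℕ} (w : Equiv.Perm (Fin n)) : ℕ :=
  (Finset.univ.filter (fun p : Fin n × Fin n => p.1 < p.2 ∧ w p.2 < w p.1)).card

/-- The number of two-cycles of an involution `y`. -/
def kap {n : ℕ} (y : Equiv.Perm (Fin n)) : ℕ :=
  (Finset.univ.filter (fun i : Fin n => i < y i)).card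

/-- `s` is a simple transposition `(i, i+1)` of `Fin n`. -/
def IsSimple {n : ℕ} (s : Equiv.Perm (Fin n)) : Prop :=
  ∃ i : ℕ, ∃ h : i + 1 < n, s = Equiv.swap ⟨i, Nat.lt_of_succ_lt h⟩ ⟨i + 1, h⟩

/-- The Richardson–Springer operation `g ⋊ s`. -/
def smult {n : ℕ} (g s : Equiv.Perm (Fin n)) : Equiv.Perm (Fin n) :=
  if s * g = g * s then g * s else s * g * s


/-- The fixed-point-free involution `v_n = (1,2)(3,4)⋯(2n-1,2n)` in `S_{2n}`. -/
def vn (n : ℕ) : Equiv.Perm (Fin (2 * n)) :=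
  ((List.finRange n).map (fun i =>
    Equiv.swap (⟨2 * i.1, by have := i.isLt; omega⟩ : Fin (2 * n))
      ⟨2 * i.1 + 1, by have := i.isLt; omega⟩)).prod

variable {N : ℕ}

lemma ell_inv (w : Equiv.Perm (Fin N)) : ell w⁻¹ = ell w := by
  unfold ell
  apply Finset.card_bij (fun p _ => (w⁻¹ p.2, w⁻¹ p.1))
  · intro p hp
    simp only [Finset.mem_filter, Finset.mem_univ, true_and] at hp ⊢
    exact ⟨hp.2, by simpa using hp.1⟩
  · intro p hp q hq hpq
    simp only [Prod.mk.injEq, EmbeddingLike.apply_eq_iff_eq] at hpq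
    exact Prod.ext hpq.2 hpq.1
  · intro q hq
    simp only [Finset.mem_filter, Finset.mem_univ, true_and] at hq ⊢
    exact ⟨(w q.2, w q.1), ⟨hq.2, by simpa using hq.1⟩, by simp⟩

lemma swap_lt {a b : Fin N} (hb : b.1 = a.1 + 1) {x y : Fin N} (hxy : x < y)
    (hne : ¬(x = a ∧ y = b)) : Equiv.swap a b x < Equiv.swap a b y := by
  rw [Equiv.swap_apply_def, Equiv.swap_apply_def]
  split_ifs <;> simp only [Fin.ext_iff, Fin.lt_def, not_and] at * <;> omega

lemma swap_pair_ne {a b : Fin N} (hb : b.1 = a.1 + 1) {p : Fin N × Fin N}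
    (hlt : p.1 < p.2) : (Equiv.swap a b p.1, Equiv.swap a b p.2) ≠ (a, b) := by
  intro h
  rw [Prod.mk.injEq, Equiv.swap_apply_eq_iff, Equiv.swap_apply_left,
    Equiv.swap_apply_eq_iff, Equiv.swap_apply_right] at h
  rw [h.1, h.2, Fin.lt_def, hb] at hlt
  omega

lemma ne_pair {a b : Fin N} {p : Fin N × Fin N} (h : p ≠ (a, b)) : ¬(p.1 = a ∧ p.2 = b) := by
  intro hc
  exact h (Prod.ext hc.1 hc.2)

lemma ell_erase {a b : Fin N} (hb : b.1 = a.1 + 1) (w : Equiv.Perm (Fin N)) :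
    (((Finset.univ.filter (fun p : Fin N × Fin N => p.1 < p.2 ∧
        (w * Equiv.swap a b) p.2 < (w * Equiv.swap a b) p.1))).erase (a, b)).card
  = (((Finset.univ.filter (fun p : Fin N × Fin N => p.1 < p.2 ∧ w p.2 < w p.1))).erase (a, b)).card := by
  apply Finset.card_bij (fun p _ => (Equiv.swap a b p.1, Equiv.swap a b p.2))
  · intro p hp
    rw [Finset.mem_erase, Finset.mem_filter] at hp ⊢
    simp only [Finset.mem_univ, true_and,
      Equiv.Perm.mul_apply] at hp ⊢
    obtain ⟨hpne, hplt, hpinv⟩ := hp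
    exact ⟨swap_pair_ne hb hplt, swap_lt hb hplt (ne_pair hpne), hpinv⟩
  · intro p hp q hq hpq
    simp only [Prod.mk.injEq, EmbeddingLike.apply_eq_iff_eq] at hpq
    exact Prod.ext hpq.1 hpq.2
  · intro q hq
    simp only [Finset.mem_erase, Finset.mem_filter, Finset.mem_univ, true_and,
      Equiv.Perm.mul_apply] at hq
    obtain ⟨hqne, hqlt, hqinv⟩ := hq
    refine ⟨(Equiv.swap a b q.1, Equiv.swap a b q.2), ?_, by simp⟩
    rw [Finset.mem_erase, Finset.mem_filter]
    simp only [Finset.mem_univ, true_and,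
      Equiv.Perm.mul_apply, Equiv.swap_apply_self]
    exact ⟨swap_pair_ne hb hqlt, swap_lt hb hqlt (ne_pair hqne), hqinv⟩

lemma ell_mul_swap_of_lt {a b : Fin N} (hb : b.1 = a.1 + 1) (w : Equiv.Perm (Fin N))
    (hw : w a < w b) : ell (w * Equiv.swap a b) = ell w + 1 := by
  have hab : a < b := by rw [Fin.lt_def, hb]; omega
  have hmem : (a, b) ∈ (Finset.univ.filter (fun p : Fin N × Fin N => p.1 < p.2 ∧
      (w * Equiv.swap a b) p.2 < (w * Equiv.swap a b) p.1)) := by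
    rw [Finset.mem_filter]; simp [Equiv.Perm.mul_apply, hab, hw]
  have hnmem : (a, b) ∉ (Finset.univ.filter (fun p : Fin N × Fin N => p.1 < p.2 ∧ w p.2 < w p.1)) := by
    simp [hab, not_lt.2 hw.le]
  unfold ell
  rw [← Finset.card_erase_add_one hmem, ell_erase hb w, Finset.erase_eq_of_notMem hnmem]

lemma ell_mul_swap_of_gt {a b : Fin N} (hb : b.1 = a.1 + 1) (w : Equiv.Perm (Fin N))
    (hw : w b < w a) : ell (w * Equiv.swap a b) + 1 = ell w := by
  have hab : a < b := by rw [Fin.lt_def, hb]; omega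
  have hnmem : (a, b) ∉ (Finset.univ.filter (fun p : Fin N × Fin N => p.1 < p.2 ∧
      (w * Equiv.swap a b) p.2 < (w * Equiv.swap a b) p.1)) := by
    rw [Finset.mem_filter]; simp [Equiv.Perm.mul_apply, hab, not_lt.2 hw.le]
  have hmem : (a, b) ∈ (Finset.univ.filter (fun p : Fin N × Fin N => p.1 < p.2 ∧ w p.2 < w p.1)) := by
    simp [hab, hw]
  unfold ell
  rw [← Finset.card_erase_add_one hmem, ← ell_erase hb w, Finset.erase_eq_of_notMem hnmem]

lemma ell_swap_mul_of_gt {a b : Fin N} (hb : b.1 = a.1 + 1) (w : Equiv.Perm (Fin N))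
    (hw : w⁻¹ b < w⁻¹ a) : ell (Equiv.swap a b * w) + 1 = ell w := by
  have h1 : ell (Equiv.swap a b * w) = ell (w⁻¹ * Equiv.swap a b) := by
    rw [← ell_inv (w⁻¹ * Equiv.swap a b), mul_inv_rev, inv_inv, Equiv.swap_inv]
  rw [h1, ell_mul_swap_of_gt hb w⁻¹ hw, ell_inv]

lemma ell_conj {a b : Fin N} (hb : b.1 = a.1 + 1) (z : Equiv.Perm (Fin N))
    (hz : z * z = 1) (hd : z b < z a) (hne : z a ≠ b) :
    ell (Equiv.swap a b * z * Equiv.swap a b) + 2 = ell z := by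
  have hzinv : z⁻¹ = z := inv_eq_of_mul_eq_one_right hz
  have h1 : ell (z * Equiv.swap a b) + 1 = ell z := ell_mul_swap_of_gt hb z hd
  have h2 : ell (Equiv.swap a b * (z * Equiv.swap a b)) + 1 = ell (z * Equiv.swap a b) := by
    apply ell_swap_mul_of_gt hb
    have hi : (z * Equiv.swap a b)⁻¹ = Equiv.swap a b * z := by
      rw [mul_inv_rev, Equiv.swap_inv, hzinv]
    rw [hi]
    simp only [Equiv.Perm.mul_apply]
    exact swap_lt hb hd (fun h => hne h.2)
  rw [mul_assoc]
  omega

lemma comm_imp {a b : Fin N} (hb : b.1 = a.1 + 1) (z : Equiv.Perm (Fin N))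
    (hc : Equiv.swap a b * z = z * Equiv.swap a b) (hfa : z a ≠ a) : z a = b := by
  by_contra hzb
  have h := congrArg (fun g : Equiv.Perm (Fin N) => g a) hc
  simp only [Equiv.Perm.mul_apply, Equiv.swap_apply_left] at h
  rw [Equiv.swap_apply_of_ne_of_ne hfa hzb] at h
  have : a = b := z.injective h
  rw [Fin.ext_iff, hb] at this
  omega

lemma fpf_conj {s z : Equiv.Perm (Fin N)} (hs : s * s = 1) (hfpf : ∀ i, z i ≠ i) :
    ∀ i, (s * z * s) i ≠ i := by
  intro x hx
  apply hfpf (s x)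
  simp only [Equiv.Perm.mul_apply] at hx
  have hss : ∀ y, s (s y) = y := fun y => by
    have := congrArg (fun g : Equiv.Perm (Fin N) => g y) hs
    simpa using this
  have := congrArg s hx
  rwa [hss] at this

lemma inv_conj {s z : Equiv.Perm (Fin N)} (hs : s * s = 1) (hz : z * z = 1) :
    (s * z * s) * (s * z * s) = 1 := by
  have h1 : ∀ p : Equiv.Perm (Fin N), s * (s * p) = p := fun p => by
    rw [← mul_assoc, hs, one_mul]
  have h2 : ∀ p : Equiv.Perm (Fin N), z * (z * p) = p := fun p => by
    rw [← mul_assoc, hz, one_mul]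
  simp only [mul_assoc, h1, h2]
  exact hs

lemma step_lemma (g s : Equiv.Perm (Fin (N))) (hsimp : IsSimple s) (hg : g * g = 1)
    (hfpf : ∀ i, g i ≠ i) (hell : ell g < ell (smult g s)) :
    smult g s * smult g s = 1 ∧ ∀ i, smult g s i ≠ i := by
  obtain ⟨i, h, rfl⟩ := hsimp
  set a : Fin N := ⟨i, Nat.lt_of_succ_lt h⟩ with ha
  set b : Fin N := ⟨i + 1, h⟩ with hbdef
  have hb : b.1 = a.1 + 1 := rfl
  have hs : Equiv.swap a b * Equiv.swap a b = 1 := Equiv.swap_mul_self a b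
  by_cases hc : Equiv.swap a b * g = g * Equiv.swap a b
  · exfalso
    have hga : g a = b := comm_imp hb g hc (hfpf a)
    have hgb : g b = a := by
      have := congrArg (fun p : Equiv.Perm (Fin N) => p a) hg
      simp only [Equiv.Perm.mul_apply, Equiv.Perm.one_apply] at this
      rw [hga] at this
      exact this
    have hdesc : g b < g a := by
      rw [hga, hgb, Fin.lt_def, hb]; omega
    have := ell_mul_swap_of_gt hb g hdesc
    rw [smult, if_pos hc] at hell
    omega
  · rw [smult, if_neg hc] at hell ⊢
    exact ⟨inv_conj hs hg, fpf_conj hs hfpf⟩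

lemma fwd_lemma : ∀ (L : List (Equiv.Perm (Fin N))) (g : Equiv.Perm (Fin N)),
    g * g = 1 → (∀ i, g i ≠ i) → (∀ s ∈ L, IsSimple s) →
    (∀ m < L.length, ell ((L.take m).foldl smult g) < ell ((L.take (m + 1)).foldl smult g)) →
    ∀ i, (L.foldl smult g) i ≠ i := by
  intro L
  induction L with
  | nil => intro g hg hfpf _ _; simpa using hfpf
  | cons s t ih =>
    intro g hg hfpf hsimp hstep
    have h0 : ell g < ell (smult g s) := by
      have := hstep 0 (by simp)
      simpa using this
    have hst := step_lemma g s (hsimp s (by simp)) hg hfpf h0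
    have hres := ih (smult g s) hst.1 hst.2 (fun s' hs' => hsimp s' (by simp [hs']))
      (fun m hm => by
        have := hstep (m + 1) (by simpa using hm)
        simpa [List.take_succ_cons] using this)
    simpa using hres

lemma prod_fix {α : Type*} (l : List (Equiv.Perm α)) (x : α) (h : ∀ g ∈ l, g x = x) :
    l.prod x = x := by
  induction l with
  | nil => simp
  | cons g t ih =>
    rw [List.prod_cons, Equiv.Perm.mul_apply, ih (fun g' hg' => h g' (List.mem_cons_of_mem _ hg')),
      h g List.mem_cons_self]

lemma prod_map_apply {α β : Type*} (F : β → Equiv.Perm α) (l : List β) (k : β) (x : α)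
    (hk : k ∈ l) (hnd : l.Nodup)
    (hfix : ∀ j ∈ l, j ≠ k → F j x = x)
    (hfix2 : ∀ j ∈ l, j ≠ k → F j (F k x) = F k x) :
    (l.map F).prod x = F k x := by
  induction l with
  | nil => cases hk
  | cons j t ih =>
    simp only [List.map_cons, List.prod_cons, Equiv.Perm.mul_apply]
    rcases eq_or_ne j k with rfl | hjk
    · have hxfix : (t.map F).prod x = x := by
        apply prod_fix
        intro g hg
        obtain ⟨j', hj', rfl⟩ := List.mem_map.1 hg
        exact hfix j' (List.mem_cons_of_mem _ hj') (fun hc => (List.nodup_cons.1 hnd).1 (hc ▸ hj'))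
      rw [hxfix]
    · have hk' : k ∈ t := by
        rcases List.mem_cons.1 hk with h | h
        · exact absurd h.symm hjk
        · exact h
      rw [ih hk' (List.nodup_cons.1 hnd).2
        (fun j' hj' hj'k => hfix j' (List.mem_cons_of_mem _ hj') hj'k)
        (fun j' hj' hj'k => hfix2 j' (List.mem_cons_of_mem _ hj') hj'k)]
      exact hfix2 j List.mem_cons_self hjk

lemma vn_apply {n : ℕ} (k : ℕ) (hk : k < n) :
    vn n ⟨2 * k, by omega⟩ = ⟨2 * k + 1, by omega⟩ ∧
    vn n ⟨2 * k + 1, by omega⟩ = ⟨2 * k, by omega⟩ := by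
  set F : Fin n → Equiv.Perm (Fin (2 * n)) := fun i =>
    Equiv.swap (⟨2 * i.1, by have := i.isLt; omega⟩ : Fin (2 * n))
      ⟨2 * i.1 + 1, by have := i.isLt; omega⟩ with hF
  have hdisj : ∀ (j : Fin n), j ≠ ⟨k, hk⟩ → ∀ (x : Fin (2 * n)),
      x.1 = 2 * k ∨ x.1 = 2 * k + 1 → F j x = x := by
    intro j hj x hx
    have hjk : j.1 ≠ k := fun hc => hj (Fin.ext hc)
    apply Equiv.swap_apply_of_ne_of_ne
    · intro hc; rw [Fin.ext_iff] at hc; simp at hc; omega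
    · intro hc; rw [Fin.ext_iff] at hc; simp at hc; omega
  have h1 : vn n ⟨2 * k, by omega⟩ = ⟨2 * k + 1, by omega⟩ := by
    have := prod_map_apply F (List.finRange n) ⟨k, hk⟩ ⟨2 * k, by omega⟩
      (List.mem_finRange _) (List.nodup_finRange n)
      (fun j _ hj => hdisj j hj _ (Or.inl rfl))
      (fun j _ hj => by
        rw [show F ⟨k, hk⟩ ⟨2 * k, by omega⟩ = ⟨2 * k + 1, by omega⟩ from Equiv.swap_apply_left _ _]
        exact hdisj j hj _ (Or.inr rfl))
    rw [vn]
    rw [this]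
    exact Equiv.swap_apply_left _ _
  have h2 : vn n ⟨2 * k + 1, by omega⟩ = ⟨2 * k, by omega⟩ := by
    have := prod_map_apply F (List.finRange n) ⟨k, hk⟩ ⟨2 * k + 1, by omega⟩
      (List.mem_finRange _) (List.nodup_finRange n)
      (fun j _ hj => hdisj j hj _ (Or.inr rfl))
      (fun j _ hj => by
        rw [show F ⟨k, hk⟩ ⟨2 * k + 1, by omega⟩ = ⟨2 * k, by omega⟩ from
          Equiv.swap_apply_right _ _]
        exact hdisj j hj _ (Or.inl rfl))
    rw [vn]
    rw [this]
    exact Equiv.swap_apply_right _ _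
  exact ⟨h1, h2⟩

lemma vn_fpf {n : ℕ} : ∀ x : Fin (2 * n), vn n x ≠ x := by
  intro x
  have hk : x.1 / 2 < n := by omega
  have hx : x.1 = 2 * (x.1 / 2) ∨ x.1 = 2 * (x.1 / 2) + 1 := by omega
  rcases hx with hx | hx
  · have hxe : x = ⟨2 * (x.1 / 2), by omega⟩ := Fin.ext hx
    rw [hxe, (vn_apply _ hk).1]
    intro hc; rw [Fin.ext_iff] at hc; simp at hc
  · have hxe : x = ⟨2 * (x.1 / 2) + 1, by omega⟩ := Fin.ext hx
    rw [hxe, (vn_apply _ hk).2]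
    intro hc; rw [Fin.ext_iff] at hc; simp at hc

lemma vn_inv {n : ℕ} : vn n * vn n = 1 := by
  ext x
  simp only [Equiv.Perm.mul_apply, Equiv.Perm.one_apply]
  have hk : x.1 / 2 < n := by omega
  have hx : x.1 = 2 * (x.1 / 2) ∨ x.1 = 2 * (x.1 / 2) + 1 := by omega
  rcases hx with hx | hx
  · have hxe : x = ⟨2 * (x.1 / 2), by omega⟩ := Fin.ext hx
    rw [hxe, (vn_apply _ hk).1, (vn_apply _ hk).2]
  · have hxe : x = ⟨2 * (x.1 / 2) + 1, by omega⟩ := Fin.ext hx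
    rw [hxe, (vn_apply _ hk).2, (vn_apply _ hk).1]

lemma vn_char {n : ℕ} (z : Equiv.Perm (Fin (2 * n))) (hz : z * z = 1)
    (hfpf : ∀ i, z i ≠ i)
    (hnb : ∀ (i : ℕ) (h : i + 1 < 2 * n),
      z ⟨i + 1, h⟩ < z ⟨i, Nat.lt_of_succ_lt h⟩ → z ⟨i, Nat.lt_of_succ_lt h⟩ = ⟨i + 1, h⟩) :
    z = vn n := by
  have zz : ∀ x, z (z x) = x := by
    intro x
    have := congrArg (fun p : Equiv.Perm (Fin (2 * n)) => p x) hz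
    simpa using this
  have key : ∀ k, ∀ (hk : k < n), z ⟨2 * k, by omega⟩ = ⟨2 * k + 1, by omega⟩ := by
    intro k
    induction k using Nat.strong_induction_on with
    | _ k ihk =>
    intro hk
    -- z preserves the low block {0, ..., 2k-1}
    have hlow : ∀ x : Fin (2 * n), x.1 < 2 * k → (z x).1 < 2 * k := by
      intro x hx
      have hm : x.1 / 2 < k := by omega
      have hmn : x.1 / 2 < n := by omega
      have hrep : x.1 = 2 * (x.1 / 2) ∨ x.1 = 2 * (x.1 / 2) + 1 := by omega
      rcases hrep with hr | hr
      · have hxe : x = ⟨2 * (x.1 / 2), by omega⟩ := Fin.ext hr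
        rw [hxe, ihk _ hm hmn]
        simp; omega
      · have hxe : x = ⟨2 * (x.1 / 2) + 1, by omega⟩ := Fin.ext hr
        have : z ⟨2 * (x.1 / 2) + 1, by omega⟩ = ⟨2 * (x.1 / 2), by omega⟩ := by
          have h1 := ihk _ hm hmn
          have := congrArg z h1
          rw [zz] at this
          exact this.symm
        rw [hxe, this]
        simp; omega
    set a := z ⟨2 * k, by omega⟩ with hadef
    have hza : z a = ⟨2 * k, by omega⟩ := zz _
    have hcase : a.1 < 2 * k ∨ a.1 = 2 * k ∨ a.1 = 2 * k + 1 ∨ 2 * k + 2 ≤ a.1 := by omega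
    rcases hcase with hlt | heq | hgood | hbig
    · exfalso
      have := hlow a hlt
      rw [hza] at this
      simp at this
    · exfalso
      exact hfpf a (by rw [hza]; exact (Fin.ext heq).symm)
    · exact Fin.ext hgood
    · exfalso
      have hia : a.1 - 1 + 1 < 2 * n := by omega
      have hieq : (⟨a.1 - 1 + 1, hia⟩ : Fin (2 * n)) = a :=
        Fin.ext (show a.1 - 1 + 1 = a.1 by omega)
      set c := z ⟨a.1 - 1, Nat.lt_of_succ_lt hia⟩ with hcdef
      have hzc : z c = ⟨a.1 - 1, Nat.lt_of_succ_lt hia⟩ := zz _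
      have hclow : ¬ c.1 < 2 * k := by
        intro hc
        have := hlow c hc
        rw [hzc] at this
        simp at this
        omega
      have hcne : c.1 ≠ 2 * k := by
        intro hc
        have : c = ⟨2 * k, by omega⟩ := Fin.ext hc
        rw [this] at hzc
        rw [← hadef] at hzc
        rw [Fin.ext_iff] at hzc
        have h2 : a.1 = a.1 - 1 := hzc
        omega
      have hdesc : z ⟨a.1 - 1 + 1, hia⟩ < z ⟨a.1 - 1, Nat.lt_of_succ_lt hia⟩ := by
        rw [hieq, hza, ← hcdef, Fin.lt_def]
        show 2 * k < c.1
        omega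
      have := hnb (a.1 - 1) hia hdesc
      rw [← hcdef] at this
      have hfin : z ⟨a.1 - 1 + 1, hia⟩ = ⟨a.1 - 1, Nat.lt_of_succ_lt hia⟩ := by
        rw [← this]; exact zz _
      rw [hieq, hza, Fin.ext_iff] at hfin
      have h3 : 2 * k = a.1 - 1 := hfin
      omega
  ext x
  have hk : x.1 / 2 < n := by omega
  have hrep : x.1 = 2 * (x.1 / 2) ∨ x.1 = 2 * (x.1 / 2) + 1 := by omega
  rcases hrep with hr | hr
  · have hxe : x = ⟨2 * (x.1 / 2), by omega⟩ := Fin.ext hr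
    rw [hxe, key _ hk, (vn_apply _ hk).1]
  · have hxe : x = ⟨2 * (x.1 / 2) + 1, by omega⟩ := Fin.ext hr
    have h1 : z ⟨2 * (x.1 / 2) + 1, by omega⟩ = ⟨2 * (x.1 / 2), by omega⟩ := by
      have := congrArg z (key _ hk)
      rw [zz] at this
      exact this.symm
    rw [hxe, h1, (vn_apply _ hk).2]

lemma conv_lemma {n : ℕ} : ∀ (e : ℕ) (z : Equiv.Perm (Fin (2 * n))), ell z = e →
    z * z = 1 → (∀ i, z i ≠ i) →
    ∃ L : List (Equiv.Perm (Fin (2 * n))),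
      (∀ s ∈ L, IsSimple s) ∧
      (∀ m < L.length,
        ell ((L.take m).foldl smult (vn n)) < ell ((L.take (m + 1)).foldl smult (vn n))) ∧
      L.foldl smult (vn n) = z := by
  intro e
  induction e using Nat.strong_induction_on with
  | _ e ih =>
  intro z he hz hfpf
  by_cases hbd : ∃ (i : ℕ) (h : i + 1 < 2 * n),
      z ⟨i + 1, h⟩ < z ⟨i, Nat.lt_of_succ_lt h⟩ ∧ z ⟨i, Nat.lt_of_succ_lt h⟩ ≠ ⟨i + 1, h⟩
  · obtain ⟨i, h, hd, hne⟩ := hbd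
    set a : Fin (2 * n) := ⟨i, Nat.lt_of_succ_lt h⟩ with hadef
    set b : Fin (2 * n) := ⟨i + 1, h⟩ with hbdef
    have hb : b.1 = a.1 + 1 := rfl
    set s := Equiv.swap a b with hsdef
    have hss : s * s = 1 := Equiv.swap_mul_self a b
    have hzz := ell_conj hb z hz hd hne
    set z' := s * z * s with hz'def
    have hz' : z' * z' = 1 := inv_conj hss hz
    have hfpf' : ∀ i, z' i ≠ i := fpf_conj hss hfpf
    obtain ⟨L, hL1, hL2, hL3⟩ := ih (ell z') (by omega) z' rfl hz' hfpf'
    have hnc : ¬ (s * z' = z' * s) := by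
      intro hcomm
      have h1 : s * z' = z * s := by
        rw [hz'def, ← mul_assoc, ← mul_assoc, hss, one_mul]
      have h2 : z' * s = s * z := by
        rw [hz'def, mul_assoc, hss, mul_one]
      rw [h1, h2] at hcomm
      exact hne (comm_imp hb z hcomm.symm (hfpf a))
    have hsm : smult z' s = z := by
      rw [smult, if_neg hnc, hz'def]
      have h1 : ∀ p : Equiv.Perm (Fin (2 * n)), s * (s * p) = p := fun p => by
        rw [← mul_assoc, hss, one_mul]
      calc s * (s * z * s) * s = s * (s * (z * (s * s))) := by simp only [mul_assoc]
        _ = z := by rw [hss, mul_one, h1]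
    have hellz' : ell z' < ell z := by omega
    refine ⟨L ++ [s], ?_, ?_, ?_⟩
    · intro s' hs'
      rcases List.mem_append.1 hs' with h' | h'
      · exact hL1 s' h'
      · simp at h'
        exact h' ▸ ⟨i, h, rfl⟩
    · intro m hm
      simp only [List.length_append, List.length_singleton] at hm
      rcases Nat.lt_or_ge m L.length with hml | hml
      · rw [List.take_append_of_le_length (by omega), List.take_append_of_le_length (by omega)]
        exact hL2 m hml
      · have hmeq : m = L.length := by omega
        subst hmeq
        rw [List.take_append_of_le_length (le_refl _), List.take_of_length_le (by simp),
          List.take_of_length_le (by simp [Nat.le_succ]), List.foldl_append]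
        simp only [List.take_length, List.foldl_cons, List.foldl_nil, hL3]
        rw [hsm]
        exact hellz'
    · rw [List.foldl_append]
      simp only [List.foldl_cons, List.foldl_nil, hL3]
      exact hsm
  · push_neg at hbd
    have hveq : z = vn n := vn_char z hz hfpf hbd
    exact ⟨[], by simp, by simp, by simp [hveq.symm]⟩

/-- For an involution `z ∈ S_{2n}`, there is a sequence of simple transpositions
transforming `v_n` into `z` via `⋊`, with each step strictly increasing the length,
if and only if `z` has no fixed points. -/
theorem stmt4 {n : ℕ} (z : Equiv.Perm (Fin (2 * n))) (hz : z * z = 1) :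
    (∃ L : List (Equiv.Perm (Fin (2 * n))),
      (∀ s ∈ L, IsSimple s) ∧
      (∀ m < L.length,
        ell ((L.take m).foldl smult (vn n)) < ell ((L.take (m + 1)).foldl smult (vn n))) ∧
      L.foldl smult (vn n) = z) ↔ (∀ i, z i ≠ i) := by
  constructor
  · rintro ⟨L, h1, h2, h3⟩
    have := fwd_lemma L (vn n) vn_inv vn_fpf h1 h2
    rwa [h3] at this
  · intro hfpf
    exact conv_lemma (ell z) z rfl hz hfpf
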